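/- Equivalence of the two k-connectivity encodings (Menger): let K = (V,E,ℓ) be a Kripke structure with symmetric edge relation E and let y be an atomic proposition labelling exactly one state. With p_1,…,p_{k−1} fresh atomic propositions, let Φ_k := ∃p_1.…∃p_{k−1}.( ⋀_{1≤i<k} EX( E( p_i ∧ ⋀_{j≠i} ¬p_j ) U y ) ∧ EX( E( ⋀_{1≤i<k} ¬p_i ) U y ) ) and Ψ_k := ∀¹p_1.…∀¹p_{k−1}. EX( E( ⋀_{1≤i<k} ¬p_i ) U y ). Then for every state x, K,x ⊨ Φ_k if and only if K,x ⊨ Ψ_k. -/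

import Mathlib

open Classical

/-- Syntax of QCTL: `φ ::= q | ¬φ | φ∨ψ | EX φ | E φ U ψ | A φ U ψ | ∃p.φ`. -/
inductive QCTL (AP : Type) : Type where
  | atom : AP → QCTL AP
  | qneg : QCTL AP → QCTL AP
  | qor  : QCTL AP → QCTL AP → QCTL AP
  | qEX  : QCTL AP → QCTL AP
  | qEU  : QCTL AP → QCTL AP → QCTL AP
  | qAU  : QCTL AP → QCTL AP → QCTL AP
  | qexi : AP → QCTL AP → QCTL AP

/-- A Kripke structure over atomic propositions `AP` with (finite) state space `V`:
a serial edge relation and a labelling function. -/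
structure Kripke (AP V : Type) where
  E : V → V → Prop
  serial : ∀ v, ∃ w, E v w
  label : V → Set AP

variable {AP V : Type}

/-- `K'` agrees with `K` (same edges) except possibly on the labelling of `p`. -/
def Kripke.AgreeExcept (K K' : Kripke AP V) (p : AP) : Prop :=
  K'.E = K.E ∧ ∀ v q, q ≠ p → (q ∈ K'.label v ↔ q ∈ K.label v)

/-- Structure semantics of QCTL. -/
def QCTL.sat : QCTL AP → Kripke AP V → V → Prop
  | .atom p, K, x => p ∈ K.label x
  | .qneg φ, K, x => ¬ φ.sat K x
  | .qor φ ψ, K, x => φ.sat K x ∨ ψ.sat K x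
  | .qEX φ, K, x => ∃ y, K.E x y ∧ φ.sat K y
  | .qEU φ ψ, K, x => ∃ ρ : ℕ → V, ρ 0 = x ∧ (∀ i, K.E (ρ i) (ρ (i + 1))) ∧
      ∃ i, ψ.sat K (ρ i) ∧ ∀ j < i, φ.sat K (ρ j)
  | .qAU φ ψ, K, x => ∀ ρ : ℕ → V, ρ 0 = x → (∀ i, K.E (ρ i) (ρ (i + 1))) →
      ∃ i, ψ.sat K (ρ i) ∧ ∀ j < i, φ.sat K (ρ j)
  | .qexi p φ, K, x => ∃ K' : Kripke AP V, K.AgreeExcept K' p ∧ φ.sat K' x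

namespace QCTL

def qand (φ ψ : QCTL AP) : QCTL AP := qneg (qor (qneg φ) (qneg ψ))
def qimp (φ ψ : QCTL AP) : QCTL AP := qor (qneg φ) ψ
def qiff (φ ψ : QCTL AP) : QCTL AP := qand (qimp φ ψ) (qimp ψ φ)
def qtop [Inhabited AP] : QCTL AP := qor (atom default) (qneg (atom default))
def qbot [Inhabited AP] : QCTL AP := qneg qtop
def qAX (φ : QCTL AP) : QCTL AP := qneg (qEX (qneg φ))
def qEF [Inhabited AP] (φ : QCTL AP) : QCTL AP := qEU qtop φ
def qAG [Inhabited AP] (φ : QCTL AP) : QCTL AP := qneg (qEF (qneg φ))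
def qall (p : AP) (φ : QCTL AP) : QCTL AP := qneg (qexi p (qneg φ))

/-- All atomic propositions occurring in a formula (free or bound). -/
def atoms : QCTL AP → Set AP
  | atom p => {p}
  | qneg φ => φ.atoms
  | qor φ ψ => φ.atoms ∪ ψ.atoms
  | qEX φ => φ.atoms
  | qEU φ ψ => φ.atoms ∪ ψ.atoms
  | qAU φ ψ => φ.atoms ∪ ψ.atoms
  | qexi p φ => insert p φ.atoms

/-- Size of a formula. -/
def qsize : QCTL AP → ℕ
  | atom _ => 1
  | qneg φ => φ.qsize + 1
  | qor φ ψ => φ.qsize + ψ.qsize + 1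
  | qEX φ => φ.qsize + 1
  | qEU φ ψ => φ.qsize + ψ.qsize + 1
  | qAU φ ψ => φ.qsize + ψ.qsize + 1
  | qexi _ φ => φ.qsize + 1

end QCTL

/-- Equivalence of two QCTL formulas: same truth value at every state of every
(finite) Kripke structure. -/
def QEquiv (φ ψ : QCTL AP) : Prop :=
  ∀ (V : Type) [Fintype V] (K : Kripke AP V) (x : V), φ.sat K x ↔ ψ.sat K x

/-- `∃p₁.…∃pₙ.φ` for a list of atomic propositions. -/
def exiMany {AP : Type} (l : List AP) (φ : QCTL AP) : QCTL AP := l.foldr QCTL.qexi φ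

/-- Conjunction of a list of formulas, with a final base conjunct. -/
def conjList {AP : Type} (l : List (QCTL AP)) (base : QCTL AP) : QCTL AP :=
  l.foldr QCTL.qand base

/-- Disjunction of a list of formulas, with a final base disjunct. -/
def disjList {AP : Type} (l : List (QCTL AP)) (base : QCTL AP) : QCTL AP :=
  l.foldr QCTL.qor base
/-- `E_{=1}F(φ) := EF φ ∧ ∀q.( EF(q∧φ) → AG(φ→q) )`, with `q` a fresh atom. -/
def EuniqF {AP : Type} [Inhabited AP] (q : AP) (φ : QCTL AP) : QCTL AP :=
  QCTL.qand (QCTL.qEF φ)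
    (QCTL.qall q
      (QCTL.qimp (QCTL.qEF (QCTL.qand (QCTL.atom q) φ))
        (QCTL.qAG (QCTL.qimp φ (QCTL.atom q)))))

/-- `∀¹p.φ := ∀p.( E_{=1}F(p) → φ )`, with `q` the fresh atom used inside `E_{=1}F`. -/
def qall1 {AP : Type} [Inhabited AP] (p q : AP) (φ : QCTL AP) : QCTL AP :=
  QCTL.qall p (QCTL.qimp (EuniqF q (QCTL.atom p)) φ)

/-- `∃¹p.φ := ∃p.( E_{=1}F(p) ∧ φ )`, with `q` the fresh atom used inside `E_{=1}F`. -/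
def qexi1 {AP : Type} [Inhabited AP] (p q : AP) (φ : QCTL AP) : QCTL AP :=
  QCTL.qexi p (QCTL.qand (EuniqF q (QCTL.atom p)) φ)
/-- The QCTL formula
`Φ_k := ∃p₁…p_{k−1}.( ⋀_{1≤i<k} EX( E(pᵢ ∧ ⋀_{j≠i}¬pⱼ) U y ) ∧ EX( E(⋀ᵢ¬pᵢ) U y ) )`. -/
def PhiConn {AP : Type} [Inhabited AP] (k : ℕ) (p : Fin (k - 1) → AP) (yA : AP) : QCTL AP :=
  exiMany ((List.finRange (k - 1)).map p)
    (conjList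
      ((List.finRange (k - 1)).map fun i =>
        QCTL.qEX (QCTL.qEU
          (conjList
            (((List.finRange (k - 1)).filter (fun j => decide (j ≠ i))).map
              fun j => QCTL.qneg (QCTL.atom (p j)))
            (QCTL.atom (p i)))
          (QCTL.atom yA)))
      (QCTL.qEX (QCTL.qEU
        (conjList ((List.finRange (k - 1)).map fun j => QCTL.qneg (QCTL.atom (p j)))
          QCTL.qtop)
        (QCTL.atom yA))))

/-- `Ψ_k := ∀¹p₁.…∀¹p_{k−1}. EX( E(⋀ᵢ¬pᵢ) U y )`, with `q i` the fresh atom used by the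
`i`-th unique-labelling quantifier `∀¹`. -/
def PsiConn {AP : Type} [Inhabited AP] (k : ℕ) (p q : Fin (k - 1) → AP) (yA : AP) : QCTL AP :=
  (List.finRange (k - 1)).foldr (fun i acc => qall1 (p i) (q i) acc)
    (QCTL.qEX (QCTL.qEU
      (conjList ((List.finRange (k - 1)).map fun j => QCTL.qneg (QCTL.atom (p j)))
        QCTL.qtop)
      (QCTL.atom yA)))

section Part1
open QCTL

variable {AP V : Type}

/-- Kripke structures with same edges and same labels are equal. -/
lemma Kripke.ext' {K₁ K₂ : Kripke AP V} (hE : K₁.E = K₂.E)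
    (hl : ∀ v a, a ∈ K₁.label v ↔ a ∈ K₂.label v) : K₁ = K₂ := by
  cases K₁; cases K₂
  simp only [Kripke.mk.injEq]
  exact ⟨hE, funext fun v => Set.ext fun a => hl v a⟩

lemma sat_qand {φ ψ : QCTL AP} {K : Kripke AP V} {x : V} :
    (qand φ ψ).sat K x ↔ φ.sat K x ∧ ψ.sat K x := by
  simp [qand, QCTL.sat]

lemma sat_qimp {φ ψ : QCTL AP} {K : Kripke AP V} {x : V} :
    (qimp φ ψ).sat K x ↔ (φ.sat K x → ψ.sat K x) := by
  simp [qimp, QCTL.sat]; tauto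

lemma sat_qtop [Inhabited AP] {K : Kripke AP V} {x : V} : (qtop : QCTL AP).sat K x := by
  simp [qtop, QCTL.sat]; tauto

lemma sat_qall {p : AP} {φ : QCTL AP} {K : Kripke AP V} {x : V} :
    (qall p φ).sat K x ↔ ∀ K' : Kripke AP V, K.AgreeExcept K' p → φ.sat K' x := by
  simp [qall, QCTL.sat]

lemma sat_conjList {l : List (QCTL AP)} {base : QCTL AP} {K : Kripke AP V} {x : V} :
    (conjList l base).sat K x ↔ (∀ φ ∈ l, φ.sat K x) ∧ base.sat K x := by
  induction l with
  | nil => simp [conjList]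
  | cons a l ih =>
    rw [show conjList (a :: l) base = qand a (conjList l base) from rfl, sat_qand, ih]
    simp only [List.mem_cons]
    constructor
    · rintro ⟨h1, h2, h3⟩; exact ⟨fun φ h => h.elim (fun e => e ▸ h1) (h2 φ), h3⟩
    · rintro ⟨h1, h2⟩; exact ⟨h1 a (Or.inl rfl), fun φ h => h1 φ (Or.inr h), h2⟩

lemma chain'_range_map {R : V → V → Prop} (ρ : ℕ → V) (hE : ∀ j, R (ρ j) (ρ (j + 1)))
    (n : ℕ) : ((List.range n).map ρ).Chain' R := by
  rw [List.Chain', List.isChain_iff_getElem]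
  intro i hi
  simp only [List.length_map, List.length_range] at hi
  simp only [List.get_eq_getElem, List.getElem_map, List.getElem_range]
  exact hE i

/-- Extend a finite chain to an infinite path using seriality. -/
lemma extend_chain (K : Kripke AP V) (l : List V) (hne : l ≠ []) (hc : l.Chain' K.E) :
    ∃ ρ : ℕ → V, (∀ j (h : j < l.length), ρ j = l.get ⟨j, h⟩) ∧
      ∀ j, K.E (ρ j) (ρ (j + 1)) := by
  classical
  have g : ∀ v : V, {w : V // K.E v w} := fun v => ⟨(K.serial v).choose, (K.serial v).choose_spec⟩
  let ρ : ℕ → V := fun n => Nat.rec (l.get ⟨0, List.length_pos_iff.2 hne⟩)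
    (fun n prev => if h : n + 1 < l.length then l.get ⟨n + 1, h⟩ else (g prev).1) n
  have hget : ∀ j (h : j < l.length), ρ j = l.get ⟨j, h⟩ := by
    intro j h
    cases j with
    | zero => rfl
    | succ n => simp only [ρ]; rw [dif_pos h]
  refine ⟨ρ, hget, ?_⟩
  intro j
  by_cases h : j + 1 < l.length
  · have h0 : j < l.length := Nat.lt_of_succ_lt h
    rw [hget j h0, show ρ (j + 1) = l.get ⟨j + 1, h⟩ from by simp only [ρ]; rw [dif_pos h]]
    exact List.isChain_iff_getElem.1 hc j (by omega)
  · rw [show ρ (j + 1) = (g (ρ j)).1 from by simp only [ρ]; rw [dif_neg h]]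
    exact (g (ρ j)).2

lemma sat_qEU_iff {φ ψ : QCTL AP} {K : Kripke AP V} {v : V} :
    (qEU φ ψ).sat K v ↔ ∃ m : List V, (v :: m).Chain' K.E ∧
      ψ.sat K ((v :: m).getLast (by simp)) ∧ ∀ u ∈ (v :: m).dropLast, φ.sat K u := by
  constructor
  · rintro ⟨ρ, h0, hE, i, hψ, hφ⟩
    have hkey : ∀ n, (List.range (n + 1)).map ρ = v :: (List.range n).map (fun j => ρ (j + 1)) := by
      intro n
      rw [List.range_succ_eq_map, List.map_cons, h0, List.map_map]
      rfl
    refine ⟨(List.range i).map (fun j => ρ (j + 1)), ?_, ?_, ?_⟩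
    · rw [← hkey]; exact chain'_range_map ρ hE (i + 1)
    · have h1 : (v :: (List.range i).map (fun j => ρ (j + 1))).getLast (by simp)
          = ((List.range (i + 1)).map ρ).getLast (by simp) := by
        congr 1; rw [hkey]
      have h3 : ((List.range (i + 1)).map ρ).getLast (by simp) = ρ i := by
        rw [List.getLast_eq_getElem]; simp
      rw [h1, h3]
      exact hψ
    · intro u hu
      have h2 : (v :: (List.range i).map (fun j => ρ (j + 1))).dropLast
          = (List.range i).map ρ := by
        rw [← hkey]
        have : (List.range (i + 1)).map ρ = ((List.range i).map ρ) ++ [ρ i] := by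
          rw [List.range_succ, List.map_append]; rfl
        rw [this, List.dropLast_concat]
      rw [h2] at hu
      simp only [List.mem_map, List.mem_range] at hu
      obtain ⟨j, hj, rfl⟩ := hu
      exact hφ j hj
  · rintro ⟨m, hc, hψ, hφ⟩
    obtain ⟨ρ, hget, hE⟩ := extend_chain K (v :: m) (by simp) hc
    refine ⟨ρ, by simpa using hget 0 (by simp), hE, m.length, ?_, ?_⟩
    · have : ρ m.length = (v :: m).getLast (by simp) := by
        rw [List.getLast_eq_getElem]
        simpa using hget m.length (by simp)
      rw [this]; exact hψ
    · intro j hj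
      have hj' : j < (v :: m).length := by simp; omega
      rw [hget j hj']
      apply hφ
      have hd : ((v :: m).dropLast)[j]'(by simp [List.length_dropLast]; omega) = (v :: m).get ⟨j, hj'⟩ := by
        simp [List.getElem_dropLast]
      rw [← hd]
      exact List.getElem_mem _
  
end Part1
section Part2
open QCTL Relation

variable {AP V : Type}

lemma chain_getLast_iff_rtg {R : V → V → Prop} {x v : V} :
    (∃ m : List V, (x :: m).Chain' R ∧ (x :: m).getLast (by simp) = v) ↔
      ReflTransGen R x v := by
  constructor
  · rintro ⟨m, hc, hv⟩
    induction m generalizing x with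
    | nil => simp at hv; subst hv; exact ReflTransGen.refl
    | cons a m ih =>
      exact ReflTransGen.head (List.isChain_cons_cons.1 hc).1
        (ih (List.isChain_cons_cons.1 hc).2 (by simpa using hv))
  · intro h
    induction h using Relation.ReflTransGen.head_induction_on with
    | refl => exact ⟨[], by simp [List.Chain'], by simp⟩
    | head hab _ ih =>
      obtain ⟨m, hc, hlast⟩ := ih
      exact ⟨_ :: m, List.isChain_cons_cons.2 ⟨hab, hc⟩, by rwa [List.getLast_cons (by simp)]⟩

lemma sat_qEF_iff [Inhabited AP] {φ : QCTL AP} {K : Kripke AP V} {x : V} :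
    (qEF φ).sat K x ↔ ∃ v, ReflTransGen K.E x v ∧ φ.sat K v := by
  rw [qEF, sat_qEU_iff]
  constructor
  · rintro ⟨m, hc, hψ, -⟩
    exact ⟨(x :: m).getLast (by simp), chain_getLast_iff_rtg.1 ⟨m, hc, rfl⟩, hψ⟩
  · rintro ⟨v, hr, hφ⟩
    obtain ⟨m, hc, hlast⟩ := chain_getLast_iff_rtg.2 hr
    exact ⟨m, hc, hlast ▸ hφ, fun u _ => sat_qtop⟩

lemma sat_qAG_iff [Inhabited AP] {φ : QCTL AP} {K : Kripke AP V} {x : V} :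
    (qAG φ).sat K x ↔ ∀ v, ReflTransGen K.E x v → φ.sat K v := by
  rw [qAG, show ((qEF φ.qneg).qneg.sat K x) = ¬ (qEF φ.qneg).sat K x from rfl, sat_qEF_iff]
  push_neg
  constructor
  · intro h v hv
    by_contra hc
    exact (h v hv) hc
  · intro h v hv
    exact fun hn => hn (h v hv)

/-- Changing the labelling of one atom at will. -/
lemma exists_relabel (K : Kripke AP V) (p : AP) (P : Set V) :
    ∃ K' : Kripke AP V, K.AgreeExcept K' p ∧ (∀ v, p ∈ K'.label v ↔ v ∈ P) := by
  classical
  refine ⟨⟨K.E, K.serial, fun v => (K.label v \ {p}) ∪ (if v ∈ P then {p} else ∅)⟩,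
    ⟨rfl, ?_⟩, ?_⟩
  · intro v q hq
    by_cases hv : v ∈ P <;> simp [hv, hq]
  · intro v
    by_cases hv : v ∈ P <;> simp [hv]

/-- `EuniqF q (atom p)` says: exactly one state reachable from here is labelled `p`. -/
lemma sat_EuniqF_iff [Inhabited AP] {p q : AP} (hqp : q ≠ p) {K : Kripke AP V} {x : V} :
    (EuniqF q (QCTL.atom p)).sat K x ↔
      (∃ v, ReflTransGen K.E x v ∧ p ∈ K.label v) ∧
      (∀ v w, ReflTransGen K.E x v → ReflTransGen K.E x w →
        p ∈ K.label v → p ∈ K.label w → v = w) := by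
  rw [EuniqF, sat_qand, sat_qEF_iff]
  constructor
  · rintro ⟨hex, huniq⟩
    refine ⟨hex, ?_⟩
    intro v w hv hw hpv hpw
    by_contra hne
    rw [sat_qall] at huniq
    obtain ⟨K', hagree, hK'⟩ := exists_relabel K q {v}
    have := huniq K' hagree
    rw [sat_qimp, sat_qEF_iff, sat_qAG_iff] at this
    have hrtg : ∀ a b, ReflTransGen K'.E a b ↔ ReflTransGen K.E a b := by
      intro a b; rw [hagree.1]
    have h1 : ∃ u, ReflTransGen K'.E x u ∧ (qand (QCTL.atom q) (QCTL.atom p)).sat K' u := by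
      refine ⟨v, (hrtg x v).2 hv, ?_⟩
      rw [sat_qand]
      exact ⟨(hK' v).2 rfl, by
        show p ∈ K'.label v
        rw [hagree.2 v p (fun h => hqp h.symm)]
        exact hpv⟩
    have h2 := this h1 w ((hrtg x w).2 hw)
    rw [sat_qimp] at h2
    have h3 : p ∈ K'.label w := by
      rw [hagree.2 w p (fun h => hqp h.symm)]
      exact hpw
    have h4 : q ∈ K'.label w := h2 h3
    rw [hK' w, Set.mem_singleton_iff] at h4
    exact hne (h4.symm)
  · rintro ⟨⟨v, hv, hpv⟩, huniq⟩
    refine ⟨⟨v, hv, hpv⟩, ?_⟩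
    rw [sat_qall]
    intro K' hagree
    rw [sat_qimp, sat_qEF_iff, sat_qAG_iff]
    rintro ⟨u, hu, hqu⟩ w hw
    rw [sat_qand] at hqu
    rw [sat_qimp]
    intro hpw
    have hrtg : ∀ a b, ReflTransGen K'.E a b ↔ ReflTransGen K.E a b := by
      intro a b; rw [hagree.1]
    have hpu : p ∈ K.label u := by
      rw [← hagree.2 u p (fun h => hqp h.symm)]
      exact hqu.2
    have hpw' : p ∈ K.label w := by
      rw [← hagree.2 w p (fun h => hqp h.symm)]
      exact hpw
    have : w = u := huniq w u ((hrtg x w).1 hw) ((hrtg x u).1 hu) hpw' hpu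
    rw [this]
    exact hqu.1

end Part2
section Part3
open QCTL Relation

variable {AP V : Type}

def AgreeOff (K K' : Kripke AP V) (s : Set AP) : Prop :=
  K'.E = K.E ∧ ∀ v a, a ∉ s → (a ∈ K'.label v ↔ a ∈ K.label v)

lemma sat_exiMany {l : List AP} {φ : QCTL AP} {K : Kripke AP V} {x : V} :
    (exiMany l φ).sat K x ↔ ∃ K', AgreeOff K K' {a | a ∈ l} ∧ φ.sat K' x := by
  induction l generalizing K with
  | nil =>
    constructor
    · intro h; exact ⟨K, ⟨rfl, fun _ _ _ => Iff.rfl⟩, h⟩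
    · rintro ⟨K', ⟨hE, hl⟩, h⟩
      rwa [Kripke.ext' hE (fun v a => hl v a (by simp))] at h
  | cons p l ih =>
    rw [show exiMany (p :: l) φ = qexi p (exiMany l φ) from rfl]
    show (∃ K₁, K.AgreeExcept K₁ p ∧ (exiMany l φ).sat K₁ x) ↔ _
    constructor
    · rintro ⟨K₁, ⟨hE1, hl1⟩, h⟩
      rw [ih] at h
      obtain ⟨K', ⟨hE2, hl2⟩, h⟩ := h
      refine ⟨K', ⟨hE2.trans hE1, ?_⟩, h⟩
      intro v a ha
      simp only [List.mem_cons, Set.mem_setOf_eq, not_or] at ha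
      rw [hl2 v a (by simpa using ha.2), hl1 v a ha.1]
    · rintro ⟨K', ⟨hE, hl⟩, h⟩
      obtain ⟨K₁, hagree, hK₁⟩ := exists_relabel K p {v | p ∈ K'.label v}
      refine ⟨K₁, hagree, ?_⟩
      rw [ih]
      refine ⟨K', ⟨hE.trans hagree.1.symm, ?_⟩, h⟩
      intro v a ha
      simp only [Set.mem_setOf_eq] at ha
      by_cases hap : a = p
      · subst hap
        rw [hK₁ v]; simp
      · rw [hl v a (by simp [ha, hap]), hagree.2 v a hap]

/-- Exactly-one-reachable condition for atom `a` in structure `M`, reachability from `x`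
measured with edge relation `R`. -/
def UniqOne (R : V → V → Prop) (x : V) (M : Kripke AP V) (a : AP) : Prop :=
  (∃ v, ReflTransGen R x v ∧ a ∈ M.label v) ∧
    ∀ v w, ReflTransGen R x v → ReflTransGen R x w →
      a ∈ M.label v → a ∈ M.label w → v = w

lemma sat_qall1 [Inhabited AP] {p q : AP} (hqp : q ≠ p) {φ : QCTL AP} {K : Kripke AP V} {x : V} :
    (qall1 p q φ).sat K x ↔
      ∀ K', K.AgreeExcept K' p → UniqOne K.E x K' p → φ.sat K' x := by
  rw [qall1, sat_qall]
  refine forall_congr' fun K' => ?_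
  refine imp_congr_right fun hagree => ?_
  rw [sat_qimp, sat_EuniqF_iff hqp]
  rw [show K'.E = K.E from hagree.1]
  rfl

lemma chain'_cons_mem_rtg {R : V → V → Prop} {x u : V} {m : List V}
    (hc : (x :: m).Chain' R) (hu : u ∈ m) : ReflTransGen R x u := by
  induction m generalizing x with
  | nil => simp at hu
  | cons a m ih =>
    rcases List.mem_cons.1 hu with rfl | hu
    · exact ReflTransGen.single (List.isChain_cons_cons.1 hc).1
    · exact ReflTransGen.head (List.isChain_cons_cons.1 hc).1 (ih (List.isChain_cons_cons.1 hc).2 hu)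

lemma sat_qEX_qEU_iff {φ : QCTL AP} {yA : AP} {M : Kripke AP V} {t x : V}
    (hy : ∀ v, yA ∈ M.label v ↔ v = t) :
    (qEX (qEU φ (QCTL.atom yA))).sat M x ↔
      ∃ m : List V, (x :: (m ++ [t])).Chain' M.E ∧ ∀ u ∈ m, φ.sat M u := by
  show (∃ w, M.E x w ∧ (qEU φ (QCTL.atom yA)).sat M w) ↔ _
  constructor
  · rintro ⟨w, hxw, h⟩
    rw [sat_qEU_iff] at h
    obtain ⟨m', hc, hlast, hφ⟩ := h
    have hlast' : (w :: m').getLast (by simp) = t := (hy _).1 hlast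
    refine ⟨(w :: m').dropLast, ?_, fun u hu => hφ u hu⟩
    have : (w :: m').dropLast ++ [t] = w :: m' := by
      conv_rhs => rw [← List.dropLast_append_getLast (l := w :: m') (by simp)]
      rw [hlast']
    rw [this]
    exact List.isChain_cons_cons.2 ⟨hxw, hc⟩
  · rintro ⟨m, hc, hφ⟩
    cases m with
    | nil =>
      refine ⟨t, (List.isChain_cons_cons.1 hc).1, ?_⟩
      rw [sat_qEU_iff]
      exact ⟨[], by simp [List.Chain'], by simpa [QCTL.sat] using (hy t).2 rfl, by simp⟩
    | cons a m' =>
      refine ⟨a, (List.isChain_cons_cons.1 hc).1, ?_⟩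
      rw [sat_qEU_iff]
      refine ⟨m' ++ [t], (List.isChain_cons_cons.1 hc).2, ?_, ?_⟩
      · have : (a :: (m' ++ [t])).getLast (by simp) = t := List.getLast_concat (l := a :: m')
        rw [this]
        simpa [QCTL.sat] using (hy t).2 rfl
      · intro u hu
        apply hφ
        have : (a :: (m' ++ [t])).dropLast = a :: m' := List.dropLast_concat (l₁ := a :: m') (b := t)
        rw [this] at hu
        exact hu

end Part3
section Part4
open QCTL Relation

variable {AP V : Type} [Inhabited AP]
variable {K : Kripke AP V} {yA : AP} {t x : V} {k : ℕ} {p q : Fin (k - 1) → AP}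

/-- Unfolding a block of `∀¹` quantifiers. -/
lemma psi_unfold (hy : ∀ v, yA ∈ K.label v ↔ v = t)
    (hpinj : Function.Injective p)
    (hpq : ∀ i j, p i ≠ q j) (hpy : ∀ i, p i ≠ yA)
    (base : QCTL AP) :
    ∀ (L : List (Fin (k - 1))), L.Nodup →
    ∀ K' : Kripke AP V, K'.E = K.E → (∀ v, yA ∈ K'.label v ↔ v = t) →
      ((L.foldr (fun i acc => qall1 (p i) (q i) acc) base).sat K' x ↔
        ∀ K'' : Kripke AP V, K''.E = K.E →
          (∀ v a, (∀ i ∈ L, a ≠ p i) → (a ∈ K''.label v ↔ a ∈ K'.label v)) →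
          (∀ i ∈ L, UniqOne K.E x K'' (p i)) →
          base.sat K'' x) := by
  intro L
  induction L with
  | nil =>
    intro _ K' hE' hy'
    simp only [List.foldr_nil, List.not_mem_nil, false_implies, implies_true, forall_const]
    constructor
    · intro h K'' hE'' hag
      rw [Kripke.ext' (hE''.trans hE'.symm) (fun v a => hag v a)]
      exact h
    · intro h
      exact h K' hE' (fun _ _ => Iff.rfl)
  | cons i L ih =>
    intro hnodup K' hE' hy'
    have hiL : i ∉ L := (List.nodup_cons.1 hnodup).1
    have hLnd : L.Nodup := (List.nodup_cons.1 hnodup).2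
    rw [List.foldr_cons, sat_qall1 (fun h => hpq i i h.symm)]
    constructor
    · intro h K'' hE'' hag huniq
      obtain ⟨K₁, hagree, hK₁⟩ := exists_relabel K' (p i) {v | p i ∈ K''.label v}
      have hE₁ : K₁.E = K.E := hagree.1.trans hE'
      have huniq1 : UniqOne K'.E x K₁ (p i) := by
        have h1 : ∀ v, (p i ∈ K₁.label v ↔ p i ∈ K''.label v) := fun v => hK₁ v
        obtain ⟨⟨v, hv, hpv⟩, hu⟩ := huniq i (List.mem_cons_self)
        rw [hE']
        exact ⟨⟨v, hv, (h1 v).2 hpv⟩,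
          fun a b ha hb hpa hpb => hu a b ha hb ((h1 a).1 hpa) ((h1 b).1 hpb)⟩
      have := h K₁ hagree huniq1
      rw [ih hLnd K₁ hE₁ (fun v => by
        rw [hagree.2 v yA (fun hh => hpy i hh.symm)]; exact hy' v)] at this
      apply this K'' hE''
      · intro v a ha
        by_cases hap : a = p i
        · subst hap
          rw [hK₁ v]; rfl
        · rw [hag v a (by
            intro j hj
            rcases List.mem_cons.1 hj with rfl | hj
            · exact hap
            · exact ha j hj), hagree.2 v a hap]
      · exact fun j hj => huniq j (List.mem_cons_of_mem i hj)
    · intro h K₁ hagree huniq1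
      have hE₁ : K₁.E = K.E := hagree.1.trans hE'
      rw [ih hLnd K₁ hE₁ (fun v => by
        rw [hagree.2 v yA (fun hh => hpy i hh.symm)]; exact hy' v)]
      intro K'' hE'' hag huniqL
      apply h K'' hE''
      · intro v a ha
        have hap : a ≠ p i := ha i (List.mem_cons_self)
        rw [hag v a (fun j hj => ha j (List.mem_cons_of_mem i hj)), hagree.2 v a hap]
      · intro j hj
        rcases List.mem_cons.1 hj with rfl | hj
        · -- j = i : transfer UniqOne from K₁
          have h1 : ∀ v, (p j ∈ K''.label v ↔ p j ∈ K₁.label v) := by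
            intro v
            exact hag v (p j) (fun j' hj' => fun hh => hiL (hpinj hh ▸ hj'))
          obtain ⟨⟨v, hv, hpv⟩, hu⟩ := huniq1
          rw [hE'] at hv hu
          exact ⟨⟨v, hv, (h1 v).2 hpv⟩,
            fun a b ha' hb hpa hpb => hu a b ha' hb ((h1 a).1 hpa) ((h1 b).1 hpb)⟩
        · exact huniqL j hj
end Part4
section Part5
open QCTL Relation

variable {AP V : Type} [Inhabited AP]
variable {K : Kripke AP V} {yA : AP} {t x : V} {k : ℕ} {p q : Fin (k - 1) → AP}

lemma base_sat {K'' : Kripke AP V} (hE'' : K''.E = K.E)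
    (hy'' : ∀ v, yA ∈ K''.label v ↔ v = t) :
    (qEX (qEU (conjList ((List.finRange (k - 1)).map fun j => qneg (QCTL.atom (p j))) qtop)
      (QCTL.atom yA))).sat K'' x ↔
    ∃ m : List V, (x :: (m ++ [t])).Chain' K.E ∧ ∀ u ∈ m, ∀ i, p i ∉ K''.label u := by
  rw [sat_qEX_qEU_iff hy'', hE'']
  apply exists_congr; intro m
  apply and_congr_right; intro _
  constructor
  · intro h u hu i
    exact (sat_conjList.1 (h u hu)).1 (qneg (QCTL.atom (p i)))
      (List.mem_map.2 ⟨i, List.mem_finRange i, rfl⟩)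
  · intro h u hu
    rw [sat_conjList]
    refine ⟨?_, sat_qtop⟩
    rintro φ hφ
    obtain ⟨i, -, rfl⟩ := List.mem_map.1 hφ
    exact h u hu i

lemma psi_iff (hy : ∀ v, yA ∈ K.label v ↔ v = t)
    (hpinj : Function.Injective p) (hpq : ∀ i j, p i ≠ q j) (hpy : ∀ i, p i ≠ yA)
    (hpfresh : ∀ i v, p i ∉ K.label v) :
    (PsiConn k p q yA).sat K x ↔
      ∀ f : Fin (k - 1) → V, (∀ i, ReflTransGen K.E x (f i)) →
        ∃ m : List V, (x :: (m ++ [t])).Chain' K.E ∧ ∀ u ∈ m, ∀ i, f i ≠ u := by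
  rw [PsiConn, psi_unfold hy hpinj hpq hpy _ (List.finRange (k - 1))
    (List.nodup_finRange _) K rfl hy]
  constructor
  · intro h f hf
    set K'' : Kripke AP V :=
      ⟨K.E, K.serial, fun v => K.label v ∪ {a | ∃ i, a = p i ∧ f i = v}⟩ with hK''
    have hlab : ∀ v a, a ∈ K''.label v ↔ a ∈ K.label v ∨ ∃ i, a = p i ∧ f i = v :=
      fun v a => Iff.rfl
    have hp'' : ∀ i v, (p i ∈ K''.label v ↔ f i = v) := by
      intro i v; rw [hlab]
      constructor
      · rintro (h' | ⟨j, hj, hv⟩)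
        · exact absurd h' (hpfresh i v)
        · rwa [hpinj hj]
      · intro h'; exact Or.inr ⟨i, rfl, h'⟩
    have hy'' : ∀ v, yA ∈ K''.label v ↔ v = t := by
      intro v; rw [hlab]
      constructor
      · rintro (h' | ⟨i, hi, -⟩)
        · exact (hy v).1 h'
        · exact absurd hi.symm (hpy i)
      · intro h'; exact Or.inl ((hy v).2 h')
    have := h K'' rfl
      (by
        intro v a ha
        rw [hlab]
        constructor
        · rintro (h' | ⟨i, hi, -⟩)
          · exact h'
          · exact absurd hi (ha i (List.mem_finRange i))
        · exact Or.inl)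
      (by
        intro i _
        refine ⟨⟨f i, hf i, (hp'' i (f i)).2 rfl⟩, ?_⟩
        intro a b _ _ hpa hpb
        rw [← (hp'' i a).1 hpa, ← (hp'' i b).1 hpb])
    rw [base_sat rfl hy''] at this
    obtain ⟨m, hc, hm⟩ := this
    refine ⟨m, hc, ?_⟩
    intro u hu i hfi
    exact hm u hu i ((hp'' i u).2 hfi)
  · intro h K'' hE'' hag huniq
    have hy'' : ∀ v, yA ∈ K''.label v ↔ v = t := by
      intro v
      rw [hag v yA (fun i _ => fun hh => hpy i hh.symm)]
      exact hy v
    choose f hf using fun i => (huniq i (List.mem_finRange i)).1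
    obtain ⟨m, hc, hm⟩ := h f (fun i => (hf i).1)
    rw [base_sat hE'' hy'']
    refine ⟨m, hc, ?_⟩
    intro u hu i hpu
    have hru : ReflTransGen K.E x u :=
      chain'_cons_mem_rtg hc (List.mem_append_left _ hu)
    have := (huniq i (List.mem_finRange i)).2 u (f i) hru (hf i).1 hpu (hf i).2
    exact hm u hu i (this ▸ rfl)

lemma phi_iff (hy : ∀ v, yA ∈ K.label v ↔ v = t)
    (hpinj : Function.Injective p) (hpy : ∀ i, p i ≠ yA)
    (hpfresh : ∀ i v, p i ∉ K.label v) :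
    (PhiConn k p yA).sat K x ↔
      ∃ D : Fin (k - 1) → List V, ∃ D0 : List V,
        (∀ i, (x :: (D i ++ [t])).Chain' K.E) ∧ (x :: (D0 ++ [t])).Chain' K.E ∧
        (∀ i j, i ≠ j → ∀ v ∈ D i, v ∉ D j) ∧ (∀ i, ∀ v ∈ D0, v ∉ D i) := by
  rw [PhiConn, sat_exiMany]
  constructor
  · rintro ⟨K', ⟨hE', hlab⟩, hsat⟩
    rw [sat_conjList] at hsat
    obtain ⟨hconj, hbase⟩ := hsat
    have hy' : ∀ v, yA ∈ K'.label v ↔ v = t := by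
      intro v
      rw [hlab v yA (by
        intro hmem
        obtain ⟨i, -, hi⟩ := List.mem_map.1 hmem
        exact hpy i hi)]
      exact hy v
    have hD : ∀ i : Fin (k - 1), ∃ m, (x :: (m ++ [t])).Chain' K.E ∧
        ∀ u ∈ m, p i ∈ K'.label u ∧ ∀ j, j ≠ i → p j ∉ K'.label u := by
      intro i
      have := hconj _ (List.mem_map.2 ⟨i, List.mem_finRange i, rfl⟩)
      rw [sat_qEX_qEU_iff hy', hE'] at this
      obtain ⟨m, hc, hm⟩ := this
      refine ⟨m, hc, ?_⟩
      intro u hu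
      have h2 := hm u hu
      rw [sat_conjList] at h2
      refine ⟨h2.2, ?_⟩
      intro j hj
      exact h2.1 _ (List.mem_map.2 ⟨j, List.mem_filter.2
        ⟨List.mem_finRange j, by simp [hj]⟩, rfl⟩)
    choose D hD1 hD2 using hD
    rw [sat_qEX_qEU_iff hy', hE'] at hbase
    obtain ⟨D0, hc0, hm0⟩ := hbase
    have hm0' : ∀ u ∈ D0, ∀ j, p j ∉ K'.label u := by
      intro u hu j
      exact (sat_conjList.1 (hm0 u hu)).1 _
        (List.mem_map.2 ⟨j, List.mem_finRange j, rfl⟩)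
    refine ⟨D, D0, hD1, hc0, ?_, ?_⟩
    · intro i j hij v hvi hvj
      exact (hD2 i v hvi).2 j (fun h => hij h.symm) (hD2 j v hvj).1
    · intro i v hv0 hvi
      exact hm0' v hv0 i (hD2 i v hvi).1
  · rintro ⟨D, D0, hcD, hc0, hdisj, hdisj0⟩
    set K' : Kripke AP V :=
      ⟨K.E, K.serial, fun v => K.label v ∪ {a | ∃ i, a = p i ∧ v ∈ D i}⟩ with hK'
    have hp' : ∀ i v, (p i ∈ K'.label v ↔ v ∈ D i) := by
      intro i v
      show p i ∈ K.label v ∪ _ ↔ _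
      constructor
      · rintro (h' | ⟨j, hj, hv⟩)
        · exact absurd h' (hpfresh i v)
        · rwa [hpinj hj]
      · intro h'; exact Or.inr ⟨i, rfl, h'⟩
    have hy' : ∀ v, yA ∈ K'.label v ↔ v = t := by
      intro v
      show yA ∈ K.label v ∪ _ ↔ _
      constructor
      · rintro (h' | ⟨i, hi, -⟩)
        · exact (hy v).1 h'
        · exact absurd hi.symm (hpy i)
      · intro h'; exact Or.inl ((hy v).2 h')
    refine ⟨K', ⟨rfl, ?_⟩, ?_⟩
    · intro v a ha
      show a ∈ K.label v ∪ _ ↔ _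
      constructor
      · rintro (h' | ⟨i, hi, -⟩)
        · exact h'
        · exact absurd (List.mem_map.2 ⟨i, List.mem_finRange i, hi.symm⟩) ha
      · exact Or.inl
    · rw [sat_conjList]
      constructor
      · intro φ hφ
        obtain ⟨i, -, rfl⟩ := List.mem_map.1 hφ
        rw [sat_qEX_qEU_iff hy']
        refine ⟨D i, hcD i, ?_⟩
        intro u hu
        rw [sat_conjList]
        refine ⟨?_, (hp' i u).2 hu⟩
        intro ψ hψ
        obtain ⟨j, hjmem, rfl⟩ := List.mem_map.1 hψ
        have hji : j ≠ i := by
          have := (List.mem_filter.1 hjmem).2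
          simpa using this
        show ¬ p j ∈ K'.label u
        rw [hp' j u]
        exact hdisj i j (Ne.symm hji) u hu
      · rw [sat_qEX_qEU_iff hy']
        refine ⟨D0, hc0, ?_⟩
        intro u hu
        rw [sat_conjList]
        refine ⟨?_, sat_qtop⟩
        intro ψ hψ
        obtain ⟨j, -, rfl⟩ := List.mem_map.1 hψ
        show ¬ p j ∈ K'.label u
        rw [hp' j u]
        exact hdisj0 j u hu
end Part5
section CutMachinery

variable {V : Type} [DecidableEq V]

/-- Prefix of `l` up to (and including) the first element belonging to `T`. -/
def cutFirst (T : Finset V) : List V → List V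
  | [] => []
  | a :: l => if a ∈ T then [a] else a :: cutFirst T l

lemma cutFirst_ne_nil (T : Finset V) {l : List V} (h : l ≠ []) : cutFirst T l ≠ [] := by
  cases l with
  | nil => exact absurd rfl h
  | cons a l => by_cases ha : a ∈ T <;> simp [cutFirst, ha]

lemma cutFirst_prefix (T : Finset V) (l : List V) : cutFirst T l <+: l := by
  induction l with
  | nil => simp [cutFirst]
  | cons a l ih =>
    by_cases ha : a ∈ T
    · simp only [cutFirst, if_pos ha]
      exact ⟨l, rfl⟩
    · simp only [cutFirst, if_neg ha]
      exact (List.prefix_cons_inj a).2 ih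

lemma cutFirst_head (T : Finset V) {l : List V} (h : l ≠ []) :
    (cutFirst T l).head (cutFirst_ne_nil T h) = l.head h := by
  cases l with
  | nil => exact absurd rfl h
  | cons a l =>
    by_cases ha : a ∈ T <;> simp [cutFirst, ha]

lemma cutFirst_getLast_mem (T : Finset V) {l : List V} (h : l ≠ [])
    (hhit : ∃ v ∈ l, v ∈ T) :
    (cutFirst T l).getLast (cutFirst_ne_nil T h) ∈ T := by
  induction l with
  | nil => exact absurd rfl h
  | cons a l ih =>
    by_cases ha : a ∈ T
    · simp only [cutFirst, if_pos ha]; simpa using ha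
    · have hlne : l ≠ [] := by
        rcases hhit with ⟨v, hv, hvT⟩
        rcases List.mem_cons.1 hv with rfl | hv
        · exact absurd hvT ha
        · exact List.ne_nil_of_mem hv
      have hhit' : ∃ v ∈ l, v ∈ T := by
        rcases hhit with ⟨v, hv, hvT⟩
        rcases List.mem_cons.1 hv with rfl | hv
        · exact absurd hvT ha
        · exact ⟨v, hv, hvT⟩
      have := ih hlne hhit'
      simp only [cutFirst, if_neg ha]
      rwa [List.getLast_cons (cutFirst_ne_nil T hlne)]

lemma cutFirst_dropLast (T : Finset V) (l : List V) :
    ∀ v ∈ (cutFirst T l).dropLast, v ∉ T := by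
  induction l with
  | nil => simp [cutFirst]
  | cons a l ih =>
    by_cases ha : a ∈ T
    · simp [cutFirst, ha]
    · simp only [cutFirst, if_neg ha]
      intro v hv
      rcases eq_or_ne (cutFirst T l) [] with hnil | hne
      · rw [hnil] at hv
        simp only [List.dropLast_singleton, List.not_mem_nil] at hv
      · rw [List.dropLast_cons_of_ne_nil hne] at hv
        rcases List.mem_cons.1 hv with rfl | hv
        · exact ha
        · exact ih v hv

/-- Suffix of `l` from (and including) the last element belonging to `T`. -/
def cutLast (T : Finset V) (l : List V) : List V := (cutFirst T l.reverse).reverse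

lemma cutLast_ne_nil (T : Finset V) {l : List V} (h : l ≠ []) : cutLast T l ≠ [] := by
  simp only [cutLast, ne_eq, List.reverse_eq_nil_iff]
  exact cutFirst_ne_nil T (List.reverse_ne_nil_iff.2 h)

lemma cutLast_suffix (T : Finset V) (l : List V) : cutLast T l <:+ l := by
  refine List.reverse_prefix.1 ?_
  rw [show (cutLast T l).reverse = cutFirst T l.reverse by simp [cutLast]]
  exact cutFirst_prefix T l.reverse

lemma cutLast_getLast (T : Finset V) {l : List V} (h : l ≠ []) :
    (cutLast T l).getLast (cutLast_ne_nil T h) = l.getLast h := by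
  have h1 : (cutFirst T l.reverse) ≠ [] := cutFirst_ne_nil T (by simp [h])
  have := cutFirst_head T (l := l.reverse) (by simp [h])
  rw [List.head_reverse] at this
  calc (cutLast T l).getLast (cutLast_ne_nil T h)
      = (cutFirst T l.reverse).reverse.getLast (by simpa [cutLast] using cutLast_ne_nil T h) := rfl
    _ = (cutFirst T l.reverse).head h1 := List.getLast_reverse _
    _ = l.getLast h := this

lemma cutLast_head_mem (T : Finset V) {l : List V} (h : l ≠ [])
    (hhit : ∃ v ∈ l, v ∈ T) :
    (cutLast T l).head (cutLast_ne_nil T h) ∈ T := by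
  have h1 : (cutFirst T l.reverse) ≠ [] := cutFirst_ne_nil T (by simp [h])
  have h2 := cutFirst_getLast_mem T (l := l.reverse) (by simp [h])
    (by rcases hhit with ⟨v, hv, hvT⟩; exact ⟨v, List.mem_reverse.2 hv, hvT⟩)
  have h3 : (cutLast T l).head (cutLast_ne_nil T h)
      = (cutFirst T l.reverse).getLast h1 := List.head_reverse _
  rw [h3]
  exact h2

lemma cutLast_tail (T : Finset V) (l : List V) :
    ∀ v ∈ (cutLast T l).tail, v ∉ T := by
  intro v hv
  have : (cutLast T l).tail = (cutFirst T l.reverse).dropLast.reverse := by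
    simp only [cutLast]
    rw [List.tail_reverse]
  rw [this, List.mem_reverse] at hv
  exact cutFirst_dropLast T l.reverse v hv

lemma prefix_eq_of_getLast_mem {l' l : List V} (hpre : l' <+: l) (hnd : l.Nodup)
    (hne : l ≠ []) (hmem : l.getLast hne ∈ l') : l' = l := by
  obtain ⟨r, rfl⟩ := hpre
  rcases eq_or_ne r [] with rfl | hr
  · simp
  · exfalso
    have hlast : (l' ++ r).getLast hne = r.getLast hr := List.getLast_append_of_ne_nil _ hr
    have h2 : r.getLast hr ∈ r := List.getLast_mem hr
    rw [hlast] at hmem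
    exact (List.nodup_append.1 hnd).2.2 _ hmem _ h2 rfl

lemma suffix_eq_of_head_mem {l' l : List V} (hsuf : l' <:+ l) (hnd : l.Nodup)
    (hne : l ≠ []) (hmem : l.head hne ∈ l') : l' = l := by
  obtain ⟨r, rfl⟩ := hsuf
  rcases eq_or_ne r [] with rfl | hr
  · simp
  · exfalso
    have hhead : (r ++ l').head hne = r.head hr := by
      rw [List.head_append]
      simp [hr]
    have h2 : r.head hr ∈ r := List.head_mem hr
    rw [hhead] at hmem
    exact (List.nodup_append.1 hnd).2.2 _ h2 _ hmem rfl

lemma mem_dropLast_of_get {l : List V} {i : ℕ} (h : i + 1 < l.length) :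
    l.get ⟨i, by omega⟩ ∈ l.dropLast := by
  have hlen : i < l.dropLast.length := by simp [List.length_dropLast]; omega
  have : l.dropLast.get ⟨i, hlen⟩ = l.get ⟨i, by omega⟩ := by
    simp [List.getElem_dropLast]
  rw [← this]
  exact List.get_mem _ ⟨i, hlen⟩

lemma mem_tail_of_get {l : List V} {i : ℕ} (h : i + 1 < l.length) :
    l.get ⟨i + 1, h⟩ ∈ l.tail := by
  have hlen : i < l.tail.length := by simp [List.length_tail]; omega
  have : l.tail.get ⟨i, hlen⟩ = l.get ⟨i + 1, h⟩ := by
    simp [List.getElem_tail]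
  rw [← this]
  exact List.get_mem _ ⟨i, hlen⟩

/-- Gluing two chains overlapping in one vertex. -/
lemma chain'_glue {R : V → V → Prop} {l₁ l₂ : List V} (h1 : l₁.Chain' R) (h2 : l₂.Chain' R)
    (hne1 : l₁ ≠ []) (hne2 : l₂ ≠ [])
    (hglue : l₁.getLast hne1 = l₂.head hne2) : (l₁ ++ l₂.tail).Chain' R := by
  cases l₂ with
  | nil => exact absurd rfl hne2
  | cons b l₂' =>
    refine List.IsChain.append h1 ((List.isChain_cons.1 h2).2) ?_
    intro p hp q hq
    rw [List.getLast?_eq_getLast hne1, Option.mem_some_iff] at hp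
    have hb : R b q := by
      cases l₂' with
      | nil => simp at hq
      | cons c l₂'' =>
        simp only [List.tail_cons, List.head?_cons, Option.mem_some_iff] at hq
        rw [← hq]
        exact (List.isChain_cons_cons.1 h2).1
    rw [← hp, hglue]
    exact hb

lemma getLast_glue {l₁ l₂ : List V} (hne1 : l₁ ≠ []) (hne2 : l₂ ≠ [])
    (hglue : l₁.getLast hne1 = l₂.head hne2) :
    (l₁ ++ l₂.tail).getLast (by simp [hne1]) = l₂.getLast hne2 := by
  cases l₂ with
  | nil => exact absurd rfl hne2
  | cons b l₂' =>
    rcases eq_or_ne l₂' [] with rfl | hr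
    · simp only [List.tail_cons, List.append_nil]
      rw [hglue]; rfl
    · rw [List.tail_cons, List.getLast_append_of_ne_nil _ hr, List.getLast_cons hr]

lemma head_glue {l₁ l₂ : List V} (hne1 : l₁ ≠ []) :
    (l₁ ++ l₂).head (by simp [hne1]) = l₁.head hne1 := by
  rw [List.head_append]; simp [hne1]

end CutMachinery
section MengerDefs

variable {V : Type} [DecidableEq V] [Fintype V]

def FWalk (F : Finset (V × V)) (l : List V) : Prop := l.Chain' (fun a b => (a, b) ∈ F)

def GSep (F : Finset (V × V)) (A B S : Finset V) : Prop :=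
  ∀ (l : List V) (h : l ≠ []), FWalk F l → l.head h ∈ A → l.getLast h ∈ B → ∃ v ∈ l, v ∈ S

def PathSys (F : Finset (V × V)) (A B : Finset V) (k : ℕ) : Prop :=
  ∃ P : Fin k → List V,
    (∀ i, P i ≠ []) ∧ (∀ i, FWalk F (P i)) ∧
    (∀ i (h : P i ≠ []), (P i).head h ∈ A) ∧
    (∀ i (h : P i ≠ []), (P i).getLast h ∈ B) ∧
    (∀ i, (P i).Nodup) ∧
    (∀ i j, i ≠ j → ∀ v ∈ P i, v ∉ P j)

lemma FWalk.mono {F F' : Finset (V × V)} (h : F' ⊆ F) {l : List V} (hw : FWalk F' l) :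
    FWalk F l := List.IsChain.imp (fun a b hab => h hab) hw

lemma fwalk_erase_or (F : Finset (V × V)) (e : V × V) {l : List V} (hw : FWalk F l) :
    FWalk (F.erase e) l ∨ ∃ (i : ℕ) (h1 : i + 1 < l.length),
      l.get ⟨i, by omega⟩ = e.1 ∧ l.get ⟨i + 1, h1⟩ = e.2 := by
  by_cases h : FWalk (F.erase e) l
  · exact Or.inl h
  · right
    rw [FWalk, List.Chain', List.isChain_iff_getElem] at h
    push_neg at h
    obtain ⟨i, hi, hnot⟩ := h
    have hF : (l.get ⟨i, by omega⟩, l.get ⟨i + 1, by omega⟩) ∈ F :=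
      List.isChain_iff_getElem.1 hw i hi
    have heq : (l.get ⟨i, by omega⟩, l.get ⟨i + 1, by omega⟩) = e := by
      by_contra hne
      exact hnot (Finset.mem_erase.2 ⟨hne, hF⟩)
    exact ⟨i, by omega, congrArg Prod.fst heq, congrArg Prod.snd heq⟩

lemma chain'_mem_head_or_pred {R : V → V → Prop} {l : List V} (hc : l.Chain' R) {v : V}
    (hv : v ∈ l) : (∃ h : l ≠ [], v = l.head h) ∨ ∃ u, R u v := by
  induction l with
  | nil => simp at hv
  | cons a l' ih =>
    rcases List.mem_cons.1 hv with rfl | hv'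
    · exact Or.inl ⟨by simp, rfl⟩
    · rcases ih (List.IsChain.tail hc) hv' with ⟨h', rfl⟩ | ⟨u, hu⟩
      · exact Or.inr ⟨a, (List.isChain_cons.1 hc).1 _ (by
          rw [List.head?_eq_head h']; rfl)⟩
      · exact Or.inr ⟨u, hu⟩

lemma mem_dropLast_or_getLast {l : List V} (h : l ≠ []) {v : V} (hv : v ∈ l) :
    v ∈ l.dropLast ∨ v = l.getLast h := by
  conv at hv => rw [← List.dropLast_append_getLast h]
  rcases List.mem_append.1 hv with h1 | h1
  · exact Or.inl h1
  · simp at h1; exact Or.inr h1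

lemma mem_head_or_tail {l : List V} (h : l ≠ []) {v : V} (hv : v ∈ l) :
    v = l.head h ∨ v ∈ l.tail := by
  conv at hv => rw [← List.cons_head_tail h]
  rcases List.mem_cons.1 hv with h1 | h1
  · exact Or.inl h1
  · exact Or.inr h1

lemma head_not_mem_tail {l : List V} (h : l ≠ []) (hnd : l.Nodup) :
    l.head h ∉ l.tail := by
  rw [← List.cons_head_tail h] at hnd
  exact (List.nodup_cons.1 hnd).1

lemma menger_empty (A B : Finset V) (k : ℕ)
    (hcut : ∀ S : Finset V, GSep (∅ : Finset (V × V)) A B S → k ≤ S.card) :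
    PathSys (∅ : Finset (V × V)) A B k := by
  have hsep : GSep (∅ : Finset (V × V)) A B (A ∩ B) := by
    intro l hne hw ha hb
    obtain ⟨a, rfl⟩ : ∃ a, l = [a] := by
      cases l with
      | nil => exact absurd rfl hne
      | cons a l' =>
        cases l' with
        | nil => exact ⟨a, rfl⟩
        | cons b l'' => exact absurd (List.isChain_cons_cons.1 hw).1 (by simp)
    exact ⟨a, by simp, Finset.mem_inter.2 ⟨by simpa using ha, by simpa using hb⟩⟩
  obtain ⟨C, hCsub, hCcard⟩ := Finset.exists_subset_card_eq (hcut _ hsep)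
  have hcardC : Fintype.card ↥C = k := by rw [Fintype.card_coe, hCcard]
  let eqv : ↥C ≃ Fin k := Fintype.equivFinOfCardEq hcardC
  refine ⟨fun i => [(eqv.symm i : V)], fun i => by simp, fun i => List.isChain_singleton _,
    ?_, ?_, fun i => List.nodup_singleton _, ?_⟩
  · intro i h
    simp only [List.head_cons]
    exact (Finset.mem_inter.1 (hCsub (eqv.symm i).2)).1
  · intro i h
    simp only [List.getLast_singleton]
    exact (Finset.mem_inter.1 (hCsub (eqv.symm i).2)).2
  · intro i j hij w hwi hwj
    simp only [List.mem_singleton] at hwi hwj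
    apply hij
    apply eqv.symm.injective
    apply Subtype.ext
    rw [← hwi, ← hwj]

end MengerDefs
section MengerMain

variable {V : Type} [DecidableEq V] [Fintype V]

lemma exists_reindex {k : ℕ} {T : Finset V} (hcard : T.card = k) (f : Fin k → V)
    (hmem : ∀ i, f i ∈ T) (hinj : Function.Injective f) :
    ∃ σ : ↥T → Fin k, Function.Injective σ ∧ ∀ s, f (σ s) = ↑s := by
  have hbij : Function.Bijective (fun i => (⟨f i, hmem i⟩ : ↥T)) :=
    (Fintype.bijective_iff_injective_and_card _).2
      ⟨fun i j h => hinj (congrArg Subtype.val h), by simp [Fintype.card_coe, hcard]⟩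
  let E := Equiv.ofBijective _ hbij
  exact ⟨E.symm, E.symm.injective, fun s => congrArg Subtype.val (E.apply_symm_apply s)⟩

theorem menger_core (n : ℕ) : ∀ (F : Finset (V × V)), F.card ≤ n →
    ∀ (A B : Finset V) (k : ℕ),
    (∀ S : Finset V, GSep F A B S → k ≤ S.card) → PathSys F A B k := by
  induction n with
  | zero =>
    intro F hF A B k hcut
    have hFe : F = ∅ := Finset.card_eq_zero.1 (Nat.le_antisymm hF (Nat.zero_le _))
    subst hFe
    exact menger_empty A B k hcut
  | succ n ih =>
    intro F hF A B k hcut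
    rcases F.eq_empty_or_nonempty with rfl | ⟨e, he⟩
    · exact menger_empty A B k hcut
    by_cases hsepF' : ∀ S : Finset V, GSep (F.erase e) A B S → k ≤ S.card
    · obtain ⟨P, h1, h2, h3, h4, h5, h6⟩ := ih (F.erase e)
        (by have := Finset.card_erase_of_mem he; omega) A B k hsepF'
      exact ⟨P, h1, fun i => (h2 i).mono (Finset.erase_subset e F), h3, h4, h5, h6⟩
    push_neg at hsepF'
    obtain ⟨S, hS, hScard⟩ := hsepF'
    set F' := F.erase e with hF'def
    set u := e.1 with hu
    set v := e.2 with hv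
    have hF'card : F'.card ≤ n := by
      rw [hF'def, Finset.card_erase_of_mem he]
      omega
    have hSu_sep : GSep F A B (insert u S) := by
      intro l hne hw ha hb
      rcases fwalk_erase_or F e hw with hw' | ⟨i, h1, hgu, hgv⟩
      · obtain ⟨z, hz, hzS⟩ := hS l hne hw' ha hb
        exact ⟨z, hz, Finset.mem_insert_of_mem hzS⟩
      · exact ⟨l.get ⟨i, by omega⟩, List.get_mem _ _,
          by rw [hgu]; exact Finset.mem_insert_self u _⟩
    have hSv_sep : GSep F A B (insert v S) := by
      intro l hne hw ha hb
      rcases fwalk_erase_or F e hw with hw' | ⟨i, h1, hgu, hgv⟩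
      · obtain ⟨z, hz, hzS⟩ := hS l hne hw' ha hb
        exact ⟨z, hz, Finset.mem_insert_of_mem hzS⟩
      · exact ⟨l.get ⟨i + 1, h1⟩, List.get_mem _ _,
          by rw [hgv]; exact Finset.mem_insert_self v _⟩
    have huS : u ∉ S := by
      intro huS
      have : insert u S = S := Finset.insert_eq_self.2 huS
      rw [this] at hSu_sep
      exact absurd (hcut S hSu_sep) (by omega)
    have hvS : v ∉ S := by
      intro hvS
      have : insert v S = S := Finset.insert_eq_self.2 hvS
      rw [this] at hSv_sep
      exact absurd (hcut S hSv_sep) (by omega)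
    have hSucard : (insert u S).card = k := by
      have h1 := hcut _ hSu_sep
      have h2 : (insert u S).card = S.card + 1 := Finset.card_insert_of_notMem huS
      omega
    have hSvcard : (insert v S).card = k := by
      have h1 := hcut _ hSv_sep
      have h2 : (insert v S).card = S.card + 1 := Finset.card_insert_of_notMem hvS
      omega
    set Su := insert u S with hSudef
    set Sv := insert v S with hSvdef
    have hSsubSu : S ⊆ Su := Finset.subset_insert _ _
    have hSsubSv : S ⊆ Sv := Finset.subset_insert _ _
    have huSu : u ∈ Su := Finset.mem_insert_self _ _
    have hvSv : v ∈ Sv := Finset.mem_insert_self _ _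
    -- Claim A : separators of (A, Su) in F' are (A,B)-separators in F
    have hcutA : ∀ T, GSep F' A Su T → k ≤ T.card := by
      intro T hT
      apply hcut T
      intro l hne hw ha hb
      have hmeet : ∃ w ∈ l, w ∈ Su := hSu_sep l hne hw ha hb
      have hl₁ne : cutFirst Su l ≠ [] := cutFirst_ne_nil Su hne
      have hl₁pre := cutFirst_prefix Su l
      have hl₁w : FWalk F (cutFirst Su l) := List.IsChain.prefix hw hl₁pre
      have hl₁w' : FWalk F' (cutFirst Su l) := by
        rcases fwalk_erase_or F e hl₁w with h' | ⟨i, h1, hgu, hgv⟩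
        · exact h'
        · exfalso
          have h0 := mem_dropLast_of_get (l := cutFirst Su l) h1
          rw [hgu] at h0
          exact cutFirst_dropLast Su l _ h0 huSu
      obtain ⟨z, hz, hzT⟩ := hT (cutFirst Su l) hl₁ne hl₁w'
        (by rw [cutFirst_head Su hne]; exact ha)
        (cutFirst_getLast_mem Su hne hmeet)
      exact ⟨z, hl₁pre.subset hz, hzT⟩
    -- Claim A' : separators of (Sv, B) in F' are (A,B)-separators in F
    have hcutB : ∀ T, GSep F' Sv B T → k ≤ T.card := by
      intro T hT
      apply hcut T
      intro l hne hw ha hb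
      have hmeet : ∃ w ∈ l, w ∈ Sv := hSv_sep l hne hw ha hb
      have hl₂ne : cutLast Sv l ≠ [] := cutLast_ne_nil Sv hne
      have hl₂suf := cutLast_suffix Sv l
      have hl₂w : FWalk F (cutLast Sv l) := List.IsChain.suffix hw hl₂suf
      have hl₂w' : FWalk F' (cutLast Sv l) := by
        rcases fwalk_erase_or F e hl₂w with h' | ⟨i, h1, hgu, hgv⟩
        · exact h'
        · exfalso
          have h0 := mem_tail_of_get (l := cutLast Sv l) h1
          rw [hgv] at h0
          exact cutLast_tail Sv l _ h0 hvSv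
      obtain ⟨z, hz, hzT⟩ := hT (cutLast Sv l) hl₂ne hl₂w'
        (cutLast_head_mem Sv hne hmeet)
        (by rw [cutLast_getLast Sv hne]; exact hb)
      exact ⟨z, hl₂suf.subset hz, hzT⟩
    obtain ⟨P0, hP0ne, hP0w, hP0a, hP0b, hP0nd, hP0disj⟩ := ih F' hF'card A Su k hcutA
    obtain ⟨Q0, hQ0ne, hQ0w, hQ0a, hQ0b, hQ0nd, hQ0disj⟩ := ih F' hF'card Sv B k hcutB
    -- truncated P-system
    set P : Fin k → List V := fun i => cutFirst Su (P0 i) with hPdef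
    have hPne : ∀ i, P i ≠ [] := fun i => cutFirst_ne_nil Su (hP0ne i)
    have hPpre : ∀ i, P i <+: P0 i := fun i => cutFirst_prefix _ _
    have hPw : ∀ i, FWalk F' (P i) := fun i => List.IsChain.prefix (hP0w i) (hPpre i)
    have hPa : ∀ i (h : P i ≠ []), (P i).head h ∈ A := fun i h => by
      rw [show (P i).head h = (P0 i).head (hP0ne i) from cutFirst_head Su (hP0ne i)]
      exact hP0a i _
    have hPb : ∀ i (h : P i ≠ []), (P i).getLast h ∈ Su := fun i h =>
      cutFirst_getLast_mem Su (hP0ne i) ⟨_, List.getLast_mem (hP0ne i), hP0b i _⟩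
    have hPnd : ∀ i, (P i).Nodup := fun i => ((hPpre i).sublist).nodup (hP0nd i)
    have hPdisj : ∀ i j, i ≠ j → ∀ w ∈ P i, w ∉ P j := fun i j hij w hwi hwj =>
      hP0disj i j hij w ((hPpre i).subset hwi) ((hPpre j).subset hwj)
    have hPonly : ∀ i (h : P i ≠ []) w, w ∈ P i → w ∈ Su → w = (P i).getLast h := by
      intro i h w hw hwSu
      rcases mem_dropLast_or_getLast h hw with h1 | h1
      · exact absurd hwSu (cutFirst_dropLast Su (P0 i) w h1)
      · exact h1
    -- truncated Q-system
    set Q : Fin k → List V := fun i => cutLast Sv (Q0 i) with hQdef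
    have hQne : ∀ i, Q i ≠ [] := fun i => cutLast_ne_nil Sv (hQ0ne i)
    have hQsuf : ∀ i, Q i <:+ Q0 i := fun i => cutLast_suffix _ _
    have hQw : ∀ i, FWalk F' (Q i) := fun i => List.IsChain.suffix (hQ0w i) (hQsuf i)
    have hQa : ∀ i (h : Q i ≠ []), (Q i).head h ∈ Sv := fun i h =>
      cutLast_head_mem Sv (hQ0ne i) ⟨_, List.head_mem (hQ0ne i), hQ0a i _⟩
    have hQb : ∀ i (h : Q i ≠ []), (Q i).getLast h ∈ B := fun i h => by
      rw [show (Q i).getLast h = (Q0 i).getLast (hQ0ne i) from cutLast_getLast Sv (hQ0ne i)]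
      exact hQ0b i _
    have hQnd : ∀ i, (Q i).Nodup := fun i => ((hQsuf i).sublist).nodup (hQ0nd i)
    have hQdisj : ∀ i j, i ≠ j → ∀ w ∈ Q i, w ∉ Q j := fun i j hij w hwi hwj =>
      hQ0disj i j hij w ((hQsuf i).subset hwi) ((hQsuf j).subset hwj)
    have hQonly : ∀ i (h : Q i ≠ []) w, w ∈ Q i → w ∈ Sv → w = (Q i).head h := by
      intro i h w hw hwSv
      rcases mem_head_or_tail h hw with h1 | h1
      · exact h1
      · exact absurd hwSv (cutLast_tail Sv (Q0 i) w h1)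
    -- reindex by endpoints
    obtain ⟨σP, hσPinj, hσP⟩ := exists_reindex hSucard (fun i => (P i).getLast (hPne i))
      (fun i => hPb i _) (by
        intro i j hij
        by_contra hne
        have hij' : (P i).getLast (hPne i) = (P j).getLast (hPne j) := hij
        apply hPdisj i j hne _ (List.getLast_mem (hPne i))
        rw [hij']
        exact List.getLast_mem (hPne j))
    obtain ⟨σQ, hσQinj, hσQ⟩ := exists_reindex hSvcard (fun i => (Q i).head (hQne i))
      (fun i => hQa i _) (by
        intro i j hij
        by_contra hne
        have hij' : (Q i).head (hQne i) = (Q j).head (hQne j) := hij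
        apply hQdisj i j hne _ (List.head_mem (hQne i))
        rw [hij']
        exact List.head_mem (hQne j))
    -- Claim B
    have claimB : ∀ (ip iq : Fin k) (w : V), w ∈ P ip → w ∈ Q iq →
        w = (P ip).getLast (hPne ip) ∧ w = (Q iq).head (hQne iq) ∧ w ∈ S := by
      intro ip iq w hwP hwQ
      have hl₁ne : cutFirst {w} (P ip) ≠ [] := cutFirst_ne_nil _ (hPne ip)
      have hl₁pre := cutFirst_prefix ({w} : Finset V) (P ip)
      have hl₁last : (cutFirst {w} (P ip)).getLast hl₁ne = w := by
        have := cutFirst_getLast_mem ({w} : Finset V) (hPne ip)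
          ⟨w, hwP, Finset.mem_singleton_self w⟩
        simpa [Finset.mem_singleton] using this
      have hl₂ne : cutLast {w} (Q iq) ≠ [] := cutLast_ne_nil _ (hQne iq)
      have hl₂suf := cutLast_suffix ({w} : Finset V) (Q iq)
      have hl₂head : (cutLast {w} (Q iq)).head hl₂ne = w := by
        have := cutLast_head_mem ({w} : Finset V) (hQne iq)
          ⟨w, hwQ, Finset.mem_singleton_self w⟩
        simpa [Finset.mem_singleton] using this
      have hglue0 : (cutFirst {w} (P ip)).getLast hl₁ne = (cutLast {w} (Q iq)).head hl₂ne := by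
        rw [hl₁last, hl₂head]
      have hW : FWalk F' (cutFirst {w} (P ip) ++ (cutLast {w} (Q iq)).tail) :=
        chain'_glue (List.IsChain.prefix (hPw ip) hl₁pre)
          (List.IsChain.suffix (hQw iq) hl₂suf) hl₁ne hl₂ne hglue0
      have hWne : cutFirst {w} (P ip) ++ (cutLast {w} (Q iq)).tail ≠ [] := by
        simp [hl₁ne]
      obtain ⟨z, hz, hzS⟩ := hS _ hWne hW
        (by
          rw [head_glue hl₁ne,
            show (cutFirst {w} (P ip)).head hl₁ne = (P ip).head (hPne ip) from
              cutFirst_head _ (hPne ip)]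
          exact hPa ip _)
        (by
          rw [getLast_glue hl₁ne hl₂ne hglue0,
            show (cutLast {w} (Q iq)).getLast hl₂ne = (Q iq).getLast (hQne iq) from
              cutLast_getLast _ (hQne iq)]
          exact hQb iq _)
      rcases List.mem_append.1 hz with hz1 | hz2
      · have hzP : z ∈ P ip := hl₁pre.subset hz1
        have hzlast : z = (P ip).getLast (hPne ip) := hPonly ip _ z hzP (hSsubSu hzS)
        have hl₁eq : cutFirst {w} (P ip) = P ip :=
          prefix_eq_of_getLast_mem hl₁pre (hPnd ip) (hPne ip) (hzlast ▸ hz1)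
        have hwlast : w = (P ip).getLast (hPne ip) := by
          have h? : (cutFirst {w} (P ip)).getLast? = (P ip).getLast? := by rw [hl₁eq]
          rw [List.getLast?_eq_getLast hl₁ne, List.getLast?_eq_getLast (hPne ip)] at h?
          rw [← Option.some_inj.1 h?, hl₁last]
        have hwS : w ∈ S := by rw [hwlast, ← hzlast]; exact hzS
        exact ⟨hwlast, hQonly iq _ w hwQ (hSsubSv hwS), hwS⟩
      · exfalso
        have hztail : z ∈ (cutLast {w} (Q iq)).tail := hz2
        have hzQ : z ∈ Q iq := hl₂suf.subset ((List.tail_sublist _).subset hztail)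
        have hzhead : z = (Q iq).head (hQne iq) := hQonly iq _ z hzQ (hSsubSv hzS)
        have hl₂eq : cutLast {w} (Q iq) = Q iq :=
          suffix_eq_of_head_mem hl₂suf (hQnd iq) (hQne iq)
            (hzhead ▸ (List.tail_sublist _).subset hztail)
        apply head_not_mem_tail (hQne iq) (hQnd iq)
        rw [hl₂eq] at hztail
        rwa [hzhead] at hztail
    -- partner map and final system
    let sv : ↥Su → ↥Sv := fun s =>
      if h : (s : V) ∈ S then ⟨(s : V), Finset.mem_insert_of_mem h⟩ else ⟨v, hvSv⟩
    have hsv_u : ∀ s : ↥Su, (s : V) ∉ S → (s : V) = u := by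
      intro s h
      rcases Finset.mem_insert.1 s.2 with h' | h'
      · exact h'
      · exact absurd h' h
    have hsv_val : ∀ s : ↥Su, ((sv s : ↥Sv) : V) = if (s : V) ∈ S then (s : V) else v := by
      intro s
      by_cases h : (s : V) ∈ S <;> simp [sv, h]
    set PP : ↥Su → List V := fun s => P (σP s) with hPPdef
    set QQ : ↥Su → List V := fun s => Q (σQ (sv s)) with hQQdef
    have hPPne : ∀ s, PP s ≠ [] := fun s => hPne _
    have hQQne : ∀ s, QQ s ≠ [] := fun s => hQne _
    have hPPlast : ∀ s, (PP s).getLast (hPPne s) = (s : V) := fun s => hσP s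
    have hQQhead : ∀ s, (QQ s).head (hQQne s) = ((sv s : ↥Sv) : V) := fun s => hσQ (sv s)
    have hglue : ∀ s : ↥Su, ((s : V) ∈ S ∨ u = v) →
        (PP s).getLast (hPPne s) = (QQ s).head (hQQne s) := by
      intro s hcase
      rw [hPPlast, hQQhead, hsv_val]
      by_cases h : (s : V) ∈ S
      · rw [if_pos h]
      · rw [if_neg h]
        rcases hcase with h' | h'
        · exact absurd h' h
        · rw [hsv_u s h, h']
    set QT : ↥Su → List V := fun s =>
      if ((s : V) ∈ S ∨ u = v) then (QQ s).tail else QQ s with hQTdef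
    have hQTsub : ∀ s, ∀ w ∈ QT s, w ∈ QQ s := by
      intro s w hw
      by_cases hc : ((s : V) ∈ S ∨ u = v)
      · rw [hQTdef] at hw; simp only [if_pos hc] at hw
        exact (List.tail_sublist _).subset hw
      · rw [hQTdef] at hw; simp only [if_neg hc] at hw
        exact hw
    set R : ↥Su → List V := fun s => PP s ++ QT s with hRdef
    have hRne : ∀ s, R s ≠ [] := by
      intro s h
      exact hPPne s (List.append_eq_nil_iff.1 h).1
    have hRw : ∀ s, FWalk F (R s) := by
      intro s
      by_cases hc : ((s : V) ∈ S ∨ u = v)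
      · have : R s = PP s ++ (QQ s).tail := by rw [hRdef]; simp [hQTdef, if_pos hc]
        rw [this]
        exact FWalk.mono (Finset.erase_subset e F)
          (chain'_glue (hPw _) (hQw _) (hPPne s) (hQQne s) (hglue s hc))
      · have : R s = PP s ++ QQ s := by rw [hRdef]; simp [hQTdef, if_neg hc]
        rw [this]
        push_neg at hc
        refine List.IsChain.append (FWalk.mono (Finset.erase_subset e F) (hPw _))
          (FWalk.mono (Finset.erase_subset e F) (hQw _)) ?_
        intro a ha b hb
        rw [List.getLast?_eq_getLast (hPPne s), Option.mem_some_iff] at ha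
        rw [List.head?_eq_head (hQQne s), Option.mem_some_iff] at hb
        have hau : a = u := by
          rw [← ha, hPPlast, hsv_u s hc.1]
        have hbv : b = v := by
          rw [← hb, hQQhead, hsv_val, if_neg hc.1]
        rw [hau, hbv]
        show (e.1, e.2) ∈ F
        simpa using he
    have hRhead : ∀ s (h : R s ≠ []), (R s).head h ∈ A := by
      intro s h
      rw [show (R s).head h = (PP s).head (hPPne s) from head_glue (hPPne s)]
      exact hPa _ _
    have hRlast : ∀ s (h : R s ≠ []), (R s).getLast h ∈ B := by
      intro s h
      by_cases hc : ((s : V) ∈ S ∨ u = v)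
      · have hEq : R s = PP s ++ (QQ s).tail := by rw [hRdef]; simp [hQTdef, if_pos hc]
        have h2 : (R s).getLast? = some ((QQ s).getLast (hQQne s)) := by
          rw [hEq, List.getLast?_eq_getLast (show PP s ++ (QQ s).tail ≠ [] by simp [hPPne s])]
          exact congrArg some (getLast_glue (hPPne s) (hQQne s) (hglue s hc))
        rw [List.getLast?_eq_getLast h] at h2
        rw [Option.some_inj.1 h2]
        exact hQb _ _
      · have hEq : R s = PP s ++ QQ s := by rw [hRdef]; simp [hQTdef, if_neg hc]
        have h2 : (R s).getLast? = some ((QQ s).getLast (hQQne s)) := by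
          rw [hEq, List.getLast?_eq_getLast (show PP s ++ QQ s ≠ [] by simp [hPPne s])]
          exact congrArg some (List.getLast_append_of_ne_nil _ (hQQne s))
        rw [List.getLast?_eq_getLast h] at h2
        rw [Option.some_inj.1 h2]
        exact hQb _ _
    have hRnd : ∀ s, (R s).Nodup := by
      intro s
      rw [hRdef]
      rw [List.nodup_append]
      refine ⟨hPnd _, ?_, ?_⟩
      · by_cases hc : ((s : V) ∈ S ∨ u = v)
        · rw [hQTdef]; simp only [if_pos hc]
          exact (List.tail_sublist _).nodup (hQnd _)
        · rw [hQTdef]; simp only [if_neg hc]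
          exact hQnd _
      · intro w hwP w' hwQT hww'
        subst w'
        have hwQ : w ∈ QQ s := hQTsub s w hwQT
        obtain ⟨hw1, hw2, hw3⟩ := claimB _ _ w hwP hwQ
        by_cases hc : ((s : V) ∈ S ∨ u = v)
        · rw [hQTdef] at hwQT; simp only [if_pos hc] at hwQT
          exact head_not_mem_tail (hQQne s) (hQnd _) (hw2 ▸ hwQT)
        · push_neg at hc
          have hws : w = (s : V) := hw1.trans (hPPlast s)
          rw [hws] at hw3
          exact hc.1 hw3
    have hsv_inj : ∀ s s' : ↥Su, s ≠ s' → sv s ≠ sv s' := by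
      intro s s' hss heq
      have hval : ((sv s : ↥Sv) : V) = ((sv s' : ↥Sv) : V) := by rw [heq]
      rw [hsv_val, hsv_val] at hval
      by_cases h1 : (s : V) ∈ S <;> by_cases h2 : (s' : V) ∈ S
      · rw [if_pos h1, if_pos h2] at hval
        exact hss (Subtype.ext hval)
      · rw [if_pos h1, if_neg h2] at hval
        exact hvS (hval ▸ h1)
      · rw [if_neg h1, if_pos h2] at hval
        exact hvS (hval ▸ h2)
      · rw [if_neg h1, if_neg h2] at hval
        exact hss (Subtype.ext (by rw [hsv_u s h1, hsv_u s' h2]))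
    have hRdisj : ∀ s s', s ≠ s' → ∀ w ∈ R s, w ∉ R s' := by
      intro s s' hss w hw hw'
      have hmem : w ∈ PP s ∨ w ∈ QQ s := by
        rcases List.mem_append.1 hw with h | h
        · exact Or.inl h
        · exact Or.inr (hQTsub s w h)
      have hmem' : w ∈ PP s' ∨ w ∈ QQ s' := by
        rcases List.mem_append.1 hw' with h | h
        · exact Or.inl h
        · exact Or.inr (hQTsub s' w h)
      rcases hmem with h1 | h1 <;> rcases hmem' with h2 | h2
      · exact hPdisj (σP s) (σP s') (fun hh => hss (hσPinj hh)) w h1 h2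
      · obtain ⟨hwa, hwb, hwc⟩ := claimB _ _ w h1 h2
        have hws : w = (s : V) := hwa.trans (hPPlast s)
        have hwsv : w = ((sv s' : ↥Sv) : V) := hwb.trans (hQQhead s')
        rw [hsv_val] at hwsv
        by_cases hc : (s' : V) ∈ S
        · rw [if_pos hc] at hwsv
          exact hss (Subtype.ext (by rw [← hws, ← hwsv]))
        · rw [if_neg hc] at hwsv
          exact hvS (by rw [← hwsv]; exact hwc)
      · obtain ⟨hwa, hwb, hwc⟩ := claimB _ _ w h2 h1
        have hws : w = (s' : V) := hwa.trans (hPPlast s')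
        have hwsv : w = ((sv s : ↥Sv) : V) := hwb.trans (hQQhead s)
        rw [hsv_val] at hwsv
        by_cases hc : (s : V) ∈ S
        · rw [if_pos hc] at hwsv
          exact hss (Subtype.ext (by rw [← hws, ← hwsv]))
        · rw [if_neg hc] at hwsv
          exact hvS (by rw [← hwsv]; exact hwc)
      · exact hQdisj (σQ (sv s)) (σQ (sv s')) (fun hh => (hsv_inj s s' hss) (hσQinj hh))
          w h1 h2
    have hcardSu : Fintype.card ↥Su = k := by rw [Fintype.card_coe, hSucard]
    let eqv : Fin k → ↥Su := (Fintype.equivFinOfCardEq hcardSu).symm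
    refine ⟨fun i => R (eqv i), fun i => hRne _, fun i => hRw _, fun i h => hRhead _ _,
      fun i h => hRlast _ _, fun i => hRnd _, ?_⟩
    intro i j hij w hwi hwj
    exact hRdisj (eqv i) (eqv j)
      (fun hh => hij ((Fintype.equivFinOfCardEq hcardSu).symm.injective hh)) w hwi hwj

end MengerMain
section Reduction

variable {V : Type} [DecidableEq V] [Fintype V]

lemma walk_clean {E : V → V → Prop} {x t : V} {m : List V}
    (hc : (x :: (m ++ [t])).Chain' E) :
    ∃ m' : List V, (x :: (m' ++ [t])).Chain' E ∧ x ∉ m' ∧ t ∉ m' ∧ ∀ u ∈ m', u ∈ m := by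
  -- Step A: remove x from the interior
  have hsplit := (List.isChain_append (l₁ := x :: m) (l₂ := [t])).1 hc
  have hchain_xm : (x :: m).Chain' E := hsplit.1
  have hedge : E ((x :: m).getLast (by simp)) t := by
    have := hsplit.2.2
    apply this
    · rw [List.getLast?_eq_getLast (by simp)]; rfl
    · rfl
  have hxm_ne : (x :: m) ≠ [] := by simp
  set l₂ := cutLast ({x} : Finset V) (x :: m) with hl₂def
  have hl₂ne : l₂ ≠ [] := cutLast_ne_nil _ hxm_ne
  have hl₂suf := cutLast_suffix ({x} : Finset V) (x :: m)
  have hl₂chain : l₂.Chain' E := List.IsChain.suffix hchain_xm hl₂suf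
  have hl₂head : l₂.head hl₂ne = x := by
    have := cutLast_head_mem ({x} : Finset V) hxm_ne ⟨x, by simp, Finset.mem_singleton_self x⟩
    simpa [Finset.mem_singleton] using this
  have hl₂last : l₂.getLast hl₂ne = (x :: m).getLast (by simp) := cutLast_getLast _ hxm_ne
  set m₁ := l₂.tail with hm₁def
  have hl₂eq : l₂ = x :: m₁ := by
    conv_lhs => rw [← List.cons_head_tail hl₂ne]
    rw [hl₂head]
  have hm₁x : x ∉ m₁ := by
    intro hx
    exact cutLast_tail ({x} : Finset V) (x :: m) x hx (Finset.mem_singleton_self x)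
  have hm₁sub : ∀ u ∈ m₁, u ∈ m := by
    intro u hu
    have h1 : u ∈ x :: m := hl₂suf.subset ((List.tail_sublist l₂).subset hu)
    rcases List.mem_cons.1 h1 with rfl | h2
    · exact absurd hu hm₁x
    · exact h2
  have hchain1 : (x :: (m₁ ++ [t])).Chain' E := by
    rw [show x :: (m₁ ++ [t]) = (x :: m₁) ++ [t] from rfl, ← hl₂eq]
    refine List.isChain_append.2 ⟨hl₂chain, List.isChain_singleton t, ?_⟩
    intro a ha b hb
    rw [List.getLast?_eq_getLast hl₂ne, Option.mem_some_iff] at ha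
    simp only [List.head?_cons, Option.mem_some_iff] at hb
    rw [← ha, ← hb, hl₂last]
    exact hedge
  -- Step B: remove t from the interior
  have hm₁t_ne : (m₁ ++ [t] : List V) ≠ [] := by simp
  have hchain_m₁t : (m₁ ++ [t] : List V).Chain' E := (List.isChain_cons.1 hchain1).2
  have hEx : E x ((m₁ ++ [t]).head hm₁t_ne) := by
    have := (List.isChain_cons.1 hchain1).1
    apply this
    rw [List.head?_eq_head hm₁t_ne]; rfl
  set l₃ := cutFirst ({t} : Finset V) (m₁ ++ [t]) with hl₃def
  have hl₃ne : l₃ ≠ [] := cutFirst_ne_nil _ hm₁t_ne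
  have hl₃pre := cutFirst_prefix ({t} : Finset V) (m₁ ++ [t])
  have hl₃chain : l₃.Chain' E := List.IsChain.prefix hchain_m₁t hl₃pre
  have hl₃head : l₃.head hl₃ne = (m₁ ++ [t]).head hm₁t_ne := cutFirst_head _ hm₁t_ne
  have hl₃last : l₃.getLast hl₃ne = t := by
    have := cutFirst_getLast_mem ({t} : Finset V) hm₁t_ne ⟨t, by simp, Finset.mem_singleton_self t⟩
    simpa [Finset.mem_singleton] using this
  set m₂ := l₃.dropLast with hm₂def
  have hl₃eq : l₃ = m₂ ++ [t] := by
    conv_lhs => rw [← List.dropLast_append_getLast hl₃ne]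
    rw [hl₃last]
  have hm₂t : t ∉ m₂ := by
    intro ht
    exact cutFirst_dropLast ({t} : Finset V) (m₁ ++ [t]) t ht (Finset.mem_singleton_self t)
  have hm₂sub : ∀ u ∈ m₂, u ∈ m₁ := by
    intro u hu
    have h1 : u ∈ m₁ ++ [t] := hl₃pre.subset ((List.dropLast_sublist l₃).subset hu)
    rcases List.mem_append.1 h1 with h2 | h2
    · exact h2
    · simp only [List.mem_singleton] at h2
      exact absurd (h2 ▸ hu) hm₂t
  refine ⟨m₂, ?_, fun hx => hm₁x (hm₂sub x hx), hm₂t, fun u hu => hm₁sub u (hm₂sub u hu)⟩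
  rw [show x :: (m₂ ++ [t]) = x :: l₃ from by rw [hl₃eq]]
  refine List.isChain_cons.2 ⟨?_, hl₃chain⟩
  intro b hb
  rw [List.head?_eq_head hl₃ne, Option.mem_some_iff] at hb
  rw [← hb, hl₃head]
  exact hEx

lemma menger_walks (E : V → V → Prop) (x t : V) (k : ℕ)
    (H : ∀ S : Finset V, S.card < k →
      ∃ m : List V, (x :: (m ++ [t])).Chain' E ∧ ∀ u ∈ m, u ∉ S) :
    ∃ I : Fin k → List V, (∀ i, (x :: (I i ++ [t])).Chain' E) ∧
      (∀ i j, i ≠ j → ∀ w ∈ I i, w ∉ I j) := by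
  classical
  by_cases hxt : E x t
  · refine ⟨fun _ => [], fun i => ?_, by simp⟩
    simpa [List.Chain'] using List.isChain_pair.2 hxt
  · have H' : ∀ S : Finset V, S.card < k → ∃ m : List V, (x :: (m ++ [t])).Chain' E ∧
        x ∉ m ∧ t ∉ m ∧ (∀ u ∈ m, u ∉ S) ∧ m ≠ [] := by
      intro S hS
      obtain ⟨m, hc, hm⟩ := H S hS
      obtain ⟨m', hc', hx', ht', hsub⟩ := walk_clean hc
      refine ⟨m', hc', hx', ht', fun u hu => hm u (hsub u hu), ?_⟩
      rintro rfl
      simp only [List.nil_append] at hc'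
      exact hxt (List.isChain_pair.1 hc')
    set F : Finset (V × V) := Finset.univ.filter
      (fun e : V × V => E e.1 e.2 ∧ e.1 ≠ x ∧ e.1 ≠ t ∧ e.2 ≠ x ∧ e.2 ≠ t) with hFdef
    set A : Finset V := Finset.univ.filter (fun w => E x w ∧ w ≠ x ∧ w ≠ t) with hAdef
    set B : Finset V := Finset.univ.filter (fun w => E w t ∧ w ≠ x ∧ w ≠ t) with hBdef
    have hcut : ∀ S : Finset V, GSep F A B S → k ≤ S.card := by
      intro S hsep
      by_contra hlt
      push_neg at hlt
      obtain ⟨m, hc, hx', ht', hmS, hmne⟩ := H' S hlt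
      have hchain_m : m.Chain' E := by
        have : m <:+: x :: (m ++ [t]) := ⟨[x], [t], by simp⟩
        exact List.IsChain.infix hc this
      have hwalk : FWalk F m := by
        rw [FWalk, List.Chain', List.isChain_iff_getElem]
        intro i hi
        have hE := List.isChain_iff_getElem.1 hchain_m i hi
        have h1 : m.get ⟨i, by omega⟩ ∈ m := List.get_mem _ _
        have h2 : m.get ⟨i + 1, by omega⟩ ∈ m := List.get_mem _ _
        rw [hFdef]
        refine Finset.mem_filter.2 ⟨Finset.mem_univ _, hE, ?_, ?_, ?_, ?_⟩ <;>
          [exact fun hh => hx' (hh ▸ h1); exact fun hh => ht' (hh ▸ h1);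
           exact fun hh => hx' (hh ▸ h2); exact fun hh => ht' (hh ▸ h2)]
      have hheadA : m.head hmne ∈ A := by
        have hEhead : E x ((m ++ [t]).head (by simp)) := by
          have := (List.isChain_cons.1 hc).1
          apply this
          rw [List.head?_eq_head (by simp : (m ++ [t] : List V) ≠ [])]; rfl
        have hheq : (m ++ [t]).head (by simp) = m.head hmne := by
          rw [List.head_append]
          simp [hmne]
        rw [hheq] at hEhead
        have hmem : m.head hmne ∈ m := List.head_mem hmne
        rw [hAdef]
        exact Finset.mem_filter.2 ⟨Finset.mem_univ _, hEhead,
          fun hh => hx' (hh ▸ hmem), fun hh => ht' (hh ▸ hmem)⟩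
      have hlastB : m.getLast hmne ∈ B := by
        have hsplit := (List.isChain_append (l₁ := x :: m) (l₂ := [t])).1 hc
        have hEt : E ((x :: m).getLast (by simp)) t := by
          apply hsplit.2.2
          · rw [List.getLast?_eq_getLast (by simp)]; rfl
          · rfl
        rw [List.getLast_cons hmne] at hEt
        have hmem : m.getLast hmne ∈ m := List.getLast_mem hmne
        rw [hBdef]
        exact Finset.mem_filter.2 ⟨Finset.mem_univ _, hEt,
          fun hh => hx' (hh ▸ hmem), fun hh => ht' (hh ▸ hmem)⟩
      obtain ⟨z, hzm, hzS⟩ := hsep m hmne hwalk hheadA hlastB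
      exact hmS z hzm hzS
    obtain ⟨P, hPne, hPw, hPa, hPb, hPnd, hPdisj⟩ := menger_core F.card F le_rfl A B k hcut
    have hmemF : ∀ i, ∀ w ∈ P i, w ≠ t ∧ w ≠ x := by
      intro i w hw
      rcases chain'_mem_head_or_pred (hPw i) hw with ⟨h', heq⟩ | ⟨z, hz⟩
      · have := hPa i h'
        rw [hAdef, Finset.mem_filter] at this
        rw [heq]
        exact ⟨this.2.2.2, this.2.2.1⟩
      · rw [hFdef, Finset.mem_filter] at hz
        exact ⟨hz.2.2.2.2.2, hz.2.2.2.2.1⟩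
    refine ⟨P, ?_, hPdisj⟩
    intro i
    rw [show x :: (P i ++ [t]) = (x :: P i) ++ [t] from rfl]
    refine List.isChain_append.2 ⟨?_, List.isChain_singleton t, ?_⟩
    · refine List.isChain_cons.2 ⟨?_, ?_⟩
      · intro b hb
        rw [List.head?_eq_head (hPne i), Option.mem_some_iff] at hb
        have := hPa i (hPne i)
        rw [hAdef, Finset.mem_filter] at this
        rw [← hb]
        exact this.2.1
      · exact List.IsChain.imp (fun a b hab => by
          rw [hFdef, Finset.mem_filter] at hab
          exact hab.2.1) (hPw i)
    · intro a ha b hb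
      rw [List.getLast?_eq_getLast (by simp : (x :: P i) ≠ []), Option.mem_some_iff] at ha
      simp only [List.head?_cons, Option.mem_some_iff] at hb
      have := hPb i (hPne i)
      rw [hBdef, Finset.mem_filter] at this
      rw [← ha, ← hb, List.getLast_cons (hPne i)]
      exact this.2.1

end Reduction
/-- Equivalence of the two `k`-connectivity encodings (by Menger's theorem): over a Kripke
structure with a symmetric edge relation in which `y` labels exactly one state, and with
the `pᵢ` (and the auxiliary `qᵢ`) fresh and pairwise distinct, `Φ_k` and `Ψ_k` are
equivalent at every state. -/
theorem phiConn_iff_psiConn {AP V : Type} [Inhabited AP] [Fintype V]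
    (K : Kripke AP V) (hsym : ∀ a b, K.E a b → K.E b a)
    (yA : AP) (t : V) (hy : ∀ v, yA ∈ K.label v ↔ v = t)
    (k : ℕ) (hk : 1 ≤ k) (p q : Fin (k - 1) → AP)
    (hpinj : Function.Injective p) (hqinj : Function.Injective q)
    (hpq : ∀ i j, p i ≠ q j) (hpy : ∀ i, p i ≠ yA) (hqy : ∀ i, q i ≠ yA)
    (hpfresh : ∀ i v, p i ∉ K.label v) (hqfresh : ∀ i v, q i ∉ K.label v)
    (x : V) :
    (PhiConn k p yA).sat K x ↔ (PsiConn k p q yA).sat K x := by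
  classical
  rw [phi_iff hy hpinj hpy hpfresh, psi_iff hy hpinj hpq hpy hpfresh]
  constructor
  · -- Φ ⇒ Ψ : pigeonhole
    rintro ⟨D, D0, hcD, hc0, hdisj, hdisj0⟩ f hf
    by_contra hcon
    push_neg at hcon
    set g : Fin ((k - 1) + 1) → List V := Fin.cases D0 D with hgdef
    have hgchain : ∀ a, (x :: (g a ++ [t])).Chain' K.E := by
      intro a
      induction a using Fin.cases with
      | zero => exact hc0
      | succ i => exact hcD i
    have hpair : ∀ a b, a ≠ b → ∀ w ∈ g a, w ∉ g b := by
      intro a b hab w hwa hwb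
      induction a using Fin.cases with
      | zero =>
        induction b using Fin.cases with
        | zero => exact hab rfl
        | succ j => exact hdisj0 j w hwa hwb
      | succ i =>
        induction b using Fin.cases with
        | zero => exact hdisj0 i w hwb hwa
        | succ j =>
          exact hdisj i j (fun hh => hab (by rw [hh])) w hwa hwb
    have hhit : ∀ a, ∃ i : Fin (k - 1), f i ∈ g a := by
      intro a
      obtain ⟨u, hu, i, hfi⟩ := hcon (g a) (hgchain a)
      exact ⟨i, by rwa [hfi]⟩
    choose hfun hfunspec using hhit
    obtain ⟨a, b, hab, heq⟩ := Fintype.exists_ne_map_eq_of_card_lt hfun (by simp)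
    apply hpair a b hab _ (hfunspec a)
    rw [heq]
    exact hfunspec b
  · -- Ψ ⇒ Φ : Menger
    intro hcut
    have H : ∀ S : Finset V, S.card < k →
        ∃ m : List V, (x :: (m ++ [t])).Chain' K.E ∧ ∀ u ∈ m, u ∉ S := by
      intro S hS
      set S' := S.filter (fun w => Relation.ReflTransGen K.E x w) with hS'def
      have hS'card : S'.card ≤ k - 1 := by
        have h1 : S'.card ≤ S.card := Finset.card_filter_le _ _
        omega
      set f : Fin (k - 1) → V := fun i =>
        if h : (i : ℕ) < S'.toList.length then S'.toList.get ⟨i, h⟩ else x with hfdef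
      have hfreach : ∀ i, Relation.ReflTransGen K.E x (f i) := by
        intro i
        rw [hfdef]
        by_cases h : (i : ℕ) < S'.toList.length
        · simp only [dif_pos h]
          have : S'.toList.get ⟨i, h⟩ ∈ S' := Finset.mem_toList.1 (List.get_mem _ _)
          exact (Finset.mem_filter.1 this).2
        · simp only [dif_neg h]
          exact Relation.ReflTransGen.refl
      obtain ⟨m, hc, hm⟩ := hcut f hfreach
      refine ⟨m, hc, ?_⟩
      intro u hu huS
      have hur : Relation.ReflTransGen K.E x u :=
        chain'_cons_mem_rtg hc (List.mem_append_left _ hu)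
      have huS' : u ∈ S'.toList := Finset.mem_toList.2 (Finset.mem_filter.2 ⟨huS, hur⟩)
      obtain ⟨j, hget⟩ := List.mem_iff_get.1 huS'
      have hjlt : (j : ℕ) < k - 1 := by
        have h2 := j.2
        have hlen : S'.toList.length = S'.card := Finset.length_toList _
        omega
      apply hm u hu ⟨j, hjlt⟩
      rw [hfdef]
      simp only
      rw [dif_pos (show ((⟨(j : ℕ), hjlt⟩ : Fin (k - 1)) : ℕ) < S'.toList.length from j.2)]
      rw [← hget]
    obtain ⟨I, hcI, hIdisj⟩ := menger_walks K.E x t k H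
    have hk1 : k - 1 + 1 = k := Nat.succ_pred_eq_of_pos hk
    refine ⟨fun i => I (Fin.cast hk1 i.succ), I (Fin.cast hk1 0), fun i => hcI _, hcI _,
      ?_, ?_⟩
    · intro i j hij w hwi hwj
      refine hIdisj _ _ (fun hh => hij ?_) w hwi hwj
      have := (Fin.cast_injective hk1) hh
      exact Fin.succ_injective _ this
    · intro i w hw0 hwi
      refine hIdisj _ _ (fun hh => ?_) w hw0 hwi
      have := (Fin.cast_injective hk1) hh
      exact (Fin.succ_ne_zero i) this.symm
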